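/- Let π := span{E_11, E_12+E_21, E_13+E_31} (the plane of type Σ7). Then exactly q+1 two-dimensional subspaces of π are equivalent to o6 and exactly q² are equivalent to o12. These account for all q²+q+1 two-dimensional subspaces of π. -/

import Mathlib

open Matrix

/-- The 3×3 matrices over `F`. -/
abbrev Mat (F : Type) : Type := Matrix (Fin 3) (Fin 3) F

section Defs

variable (F : Type) [Field F]

/-- The congruence action `M ↦ A * M * Aᵀ` as an `F`-linear map. -/
def congrAct (A : Mat F) : Mat F →ₗ[F] Mat F where
  toFun M := A * M * Aᵀ
  map_add' M N := by simp [Matrix.mul_add, Matrix.add_mul]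
  map_smul' c M := by simp [Matrix.mul_smul, Matrix.smul_mul]

/-- Two subspaces `V`, `W` of the space of 3×3 matrices over `F` are equivalent if
`W = A·V = {A * M * Aᵀ : M ∈ V}` for some invertible matrix `A`. -/
def MatEquiv (V W : Submodule F (Mat F)) : Prop :=
  ∃ A : Mat F, IsUnit A ∧ W = V.map (congrAct F A)

/-- `Eij F i j` is the 3×3 matrix with a single `1` in position `(i,j)`. -/
def Eij (i j : Fin 3) : Mat F := Matrix.single i j 1

/-- The number of two-dimensional subspaces of `π` that are equivalent to `ℓ`. -/
noncomputable def lineCount (π ℓ : Submodule F (Mat F)) : ℕ :=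
  Nat.card {W : Submodule F (Mat F) // W ≤ π ∧ Module.finrank F ↥W = 2 ∧ MatEquiv F W ℓ}

/-- Representative of the line orbit `o₅`. -/
def o5 : Submodule F (Mat F) :=
  Submodule.span F {Matrix.diagonal ![1, 0, 0], Matrix.diagonal ![0, 1, 0]}

/-- Representative of the line orbit `o₆`. -/
def o6 : Submodule F (Mat F) :=
  Submodule.span F {Matrix.diagonal ![1, 0, 0], Eij F 0 1 + Eij F 1 0}

/-- Representative of the line orbit `o₈,₁`. -/
def o8_1 : Submodule F (Mat F) :=
  Submodule.span F {Matrix.diagonal ![1, 0, 0], Matrix.diagonal ![0, 1, -1]}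

/-- Representative of the line orbit `o₈,₂`, for `ε` a nonsquare. -/
def o8_2 (ε : F) : Submodule F (Mat F) :=
  Submodule.span F {Matrix.diagonal ![1, 0, 0], Matrix.diagonal ![0, 1, -ε]}

/-- Representative of the line orbit `o₉`. -/
def o9 : Submodule F (Mat F) :=
  Submodule.span F {Matrix.diagonal ![1, 0, 0], Eij F 1 1 + Eij F 0 2 + Eij F 2 0}

/-- Representative of the line orbit `o₁₀`, for an admissible pair `(u, v)`. -/
def o10 (u v : F) : Submodule F (Mat F) :=
  Submodule.span F {v • Eij F 0 0 + Eij F 1 1, Eij F 0 1 + Eij F 1 0 + u • Eij F 1 1}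

/-- Representative of the line orbit `o₁₂`. -/
def o12 : Submodule F (Mat F) :=
  Submodule.span F {Eij F 0 1 + Eij F 1 0, Eij F 1 2 + Eij F 2 1}

/-- Representative of the line orbit `o₁₃,₁`. -/
def o13_1 : Submodule F (Mat F) :=
  Submodule.span F {Eij F 0 1 + Eij F 1 0, Matrix.diagonal ![0, 1, -1]}

/-- Representative of the line orbit `o₁₃,₂`, for `ε` a nonsquare. -/
def o13_2 (ε : F) : Submodule F (Mat F) :=
  Submodule.span F {Eij F 0 1 + Eij F 1 0, Matrix.diagonal ![0, 1, -ε]}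

/-- Representative of the line orbit `o₁₄,₁`. -/
def o14_1 : Submodule F (Mat F) :=
  Submodule.span F {Matrix.diagonal ![1, -1, 0], Matrix.diagonal ![0, -1, 1]}

/-- Representative of the line orbit `o₁₄,₂`, for `ε` a nonsquare. -/
def o14_2 (ε : F) : Submodule F (Mat F) :=
  Submodule.span F {Matrix.diagonal ![1, -ε, 0], Matrix.diagonal ![0, -ε, 1]}

/-- Representative of the line orbits `o₁₅,₁` and `o₁₅,₂`, for an admissible pair `(u, v)`. -/
def o15 (u v : F) : Submodule F (Mat F) :=
  Submodule.span F {Eij F 0 1 + Eij F 1 0 + u • Eij F 1 1 + Eij F 2 2, v • Eij F 0 0 + Eij F 1 1}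

/-- Representative of the line orbit `o₁₆`. -/
def o16 : Submodule F (Mat F) :=
  Submodule.span F {Eij F 1 1 + Eij F 0 2 + Eij F 2 0, Eij F 1 2 + Eij F 2 1}

/-- Representative of the line orbit `o₁₇`, for an admissible triple `(u, v, w)`. -/
def o17 (u v w : F) : Submodule F (Mat F) :=
  Submodule.span F {v⁻¹ • Eij F 0 0 - w • Eij F 1 1 + Eij F 1 2 + Eij F 2 1,
    Eij F 0 1 + Eij F 1 0 + u • Eij F 1 1 + Eij F 2 2}

/-- `(u, v)` is admissible for `o₁₀`: `v·λ² + u·v·λ − 1 ≠ 0` for all `λ ∈ F`. -/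
def o10Adm (u v : F) : Prop := ∀ l : F, v * l ^ 2 + u * v * l - 1 ≠ 0

/-- `(u, v)` is admissible for `o₁₅,₁`: additionally `−v` is a nonzero square. -/
def o15_1Adm (u v : F) : Prop := o10Adm F u v ∧ -v ≠ 0 ∧ IsSquare (-v)

/-- `(u, v)` is admissible for `o₁₅,₂`: additionally `−v` is a nonsquare. -/
def o15_2Adm (u v : F) : Prop := o10Adm F u v ∧ ¬ IsSquare (-v)

/-- `(u, v, w)` is admissible for `o₁₇`: `v ≠ 0` and `λ³ + w·λ² − u·λ + v ≠ 0` for all `λ ∈ F`. -/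
def o17Adm (u v w : F) : Prop := v ≠ 0 ∧ ∀ l : F, l ^ 3 + w * l ^ 2 - u * l + v ≠ 0

end Defs

/-- The plane of type Σ for statement 6. -/
def plane (F : Type) [Field F]  : Submodule F (Mat F) :=
  Submodule.span F {Eij F 0 0, Eij F 0 1 + Eij F 1 0, Eij F 0 2 + Eij F 2 0}

namespace Stmt6

variable {F : Type} [Field F]

/-- The generic element of the plane. -/
def mk3 (a b c : F) : Mat F := !![a, b, c; b, 0, 0; c, 0, 0]

lemma mk3_smul (s a b c : F) : s • mk3 a b c = mk3 (s*a) (s*b) (s*c) := by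
  ext i j; fin_cases i <;> fin_cases j <;> simp [mk3, Matrix.vecHead, Matrix.vecTail]

lemma mk3_add (a b c a' b' c' : F) :
    mk3 a b c + mk3 a' b' c' = mk3 (a+a') (b+b') (c+c') := by
  ext i j; fin_cases i <;> fin_cases j <;> simp [mk3, Matrix.vecHead, Matrix.vecTail]

lemma mk3_inj {a b c a' b' c' : F} (h : mk3 a b c = mk3 a' b' c') :
    a = a' ∧ b = b' ∧ c = c' := by
  refine ⟨?_, ?_, ?_⟩
  · simpa [mk3] using congr_fun (congr_fun h 0) 0
  · simpa [mk3] using congr_fun (congr_fun h 0) 1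
  · simpa [mk3] using congr_fun (congr_fun h 0) 2

lemma mk3_zero : (0 : Mat F) = mk3 0 0 0 := by
  ext i j; fin_cases i <;> fin_cases j <;> simp [mk3, Matrix.vecHead, Matrix.vecTail]

lemma mk3_congr {a b c a' b' c' : F} (h1 : a = a') (h2 : b = b') (h3 : c = c') :
    mk3 a b c = mk3 a' b' c' := by rw [h1, h2, h3]

lemma e00_eq : Eij F 0 0 = mk3 1 0 0 := by
  ext i j; fin_cases i <;> fin_cases j <;> simp [mk3, Eij, Matrix.single, Matrix.vecHead, Matrix.vecTail]

lemma e01_eq : Eij F 0 1 + Eij F 1 0 = mk3 0 1 0 := by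
  ext i j; fin_cases i <;> fin_cases j <;> simp [mk3, Eij, Matrix.single, Matrix.vecHead, Matrix.vecTail]

lemma e02_eq : Eij F 0 2 + Eij F 2 0 = mk3 0 0 1 := by
  ext i j; fin_cases i <;> fin_cases j <;> simp [mk3, Eij, Matrix.single, Matrix.vecHead, Matrix.vecTail]

lemma diag_eq : (Matrix.diagonal ![1, 0, 0] : Mat F) = mk3 1 0 0 := by
  ext i j; fin_cases i <;> fin_cases j <;>
    simp [mk3, Matrix.diagonal, Matrix.vecHead, Matrix.vecTail]

def X12 : Mat F := !![0,0,0;0,0,1;0,1,0]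

lemma e12_eq : Eij F 1 2 + Eij F 2 1 = (X12 : Mat F) := by
  ext i j; fin_cases i <;> fin_cases j <;> simp [X12, Eij, Matrix.single, Matrix.vecHead, Matrix.vecTail]

lemma plane_eq : plane F = Submodule.span F {mk3 1 0 0, mk3 0 1 0, mk3 0 0 1} := by
  unfold plane; rw [e00_eq, e01_eq, e02_eq]

lemma o6_eq : o6 F = Submodule.span F {mk3 1 0 0, mk3 0 1 0} := by
  unfold o6; rw [diag_eq, e01_eq]

lemma o12_eq : o12 F = Submodule.span F {mk3 0 1 0, (X12 : Mat F)} := by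
  unfold o12; rw [e01_eq, e12_eq]

lemma mem_plane_iff {M : Mat F} : M ∈ plane F ↔ ∃ a b c : F, M = mk3 a b c := by
  rw [plane_eq]
  constructor
  · intro h
    rw [Submodule.mem_span_insert] at h; obtain ⟨a, z, hz, rfl⟩ := h
    rw [Submodule.mem_span_insert] at hz; obtain ⟨b, w, hw, rfl⟩ := hz
    rw [Submodule.mem_span_singleton] at hw; obtain ⟨c, rfl⟩ := hw
    refine ⟨a, b, c, ?_⟩
    rw [mk3_smul, mk3_smul, mk3_smul, mk3_add, mk3_add]
    exact mk3_congr (by ring) (by ring) (by ring)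
  · rintro ⟨a, b, c, rfl⟩
    have h1 : mk3 a b c = a • mk3 1 0 0 + (b • mk3 0 1 0 + c • mk3 0 0 1) := by
      rw [mk3_smul, mk3_smul, mk3_smul, mk3_add, mk3_add]
      exact mk3_congr (by ring) (by ring) (by ring)
    rw [h1]
    refine Submodule.add_mem _ (Submodule.smul_mem _ _ (Submodule.subset_span (by simp)))
      (Submodule.add_mem _ (Submodule.smul_mem _ _ (Submodule.subset_span (by simp)))
        (Submodule.smul_mem _ _ (Submodule.subset_span (by simp))))

lemma mem_span_pair_of {P Q M : Mat F} (x y : F) (h : M = x • P + y • Q) :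
    M ∈ Submodule.span F {P, Q} :=
  Submodule.mem_span_pair.mpr ⟨x, y, h.symm⟩

lemma span_pair_eq {M N P Q : Mat F} (x y x' y' u v u' v' : F)
    (hP : P = x • M + y • N) (hQ : Q = x' • M + y' • N)
    (hM : M = u • P + v • Q) (hN : N = u' • P + v' • Q) :
    Submodule.span F {M, N} = Submodule.span F {P, Q} := by
  apply le_antisymm <;> rw [Submodule.span_le] <;>
    rintro Z (rfl | rfl)
  · exact mem_span_pair_of u v hM
  · exact mem_span_pair_of u' v' hN
  · exact mem_span_pair_of x y hP
  · exact mem_span_pair_of x' y' hQ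

lemma finrank_span_two {M N : Mat F} (h : LinearIndependent F ![M, N]) :
    Module.finrank F ↥(Submodule.span F {M, N}) = 2 := by
  have := finrank_span_eq_card h
  rwa [Matrix.range_cons_cons_empty, Fintype.card_fin] at this

lemma mk3_comb (x y a b c a' b' c' p q r : F) (h1 : x*a+y*a' = p) (h2 : x*b+y*b' = q)
    (h3 : x*c+y*c' = r) :
    mk3 p q r = x • mk3 a b c + y • mk3 a' b' c' := by
  rw [mk3_smul, mk3_smul, mk3_add]; exact mk3_congr h1.symm h2.symm h3.symm

lemma lin_ind_mk3 {a b c a' b' c' : F}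
    (h : ∀ x y : F, x*a+y*a' = 0 → x*b+y*b' = 0 → x*c+y*c' = 0 → x = 0 ∧ y = 0) :
    LinearIndependent F ![mk3 a b c, mk3 a' b' c'] := by
  rw [LinearIndependent.pair_iff]
  intro s t hst
  rw [mk3_smul, mk3_smul, mk3_add, mk3_zero] at hst
  obtain ⟨h1, h2, h3⟩ := mk3_inj hst
  exact h s t h1 h2 h3

lemma coord_of_ind {a b c a' b' c' : F}
    (h : LinearIndependent F ![mk3 a b c, mk3 a' b' c']) :
    ∀ x y : F, x*a+y*a' = 0 → x*b+y*b' = 0 → x*c+y*c' = 0 → x = 0 ∧ y = 0 := by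
  intro x y h1 h2 h3
  refine LinearIndependent.pair_iff.mp h x y ?_
  rw [(mk3_comb x y a b c a' b' c' 0 0 0 h1 h2 h3).symm, ← mk3_zero]

def lineOf : Option F ⊕ F × F → Submodule F (Mat F)
  | .inl (.some t) => Submodule.span F {mk3 1 0 0, mk3 0 1 t}
  | .inl .none => Submodule.span F {mk3 1 0 0, mk3 0 0 1}
  | .inr p => Submodule.span F {mk3 p.1 1 0, mk3 p.2 0 1}

lemma lineOf_le (x : Option F ⊕ F × F) : lineOf x ≤ plane F := by
  have : ∀ P Q : Mat F, (∃ a b c : F, P = mk3 a b c) → (∃ a b c : F, Q = mk3 a b c) →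
      Submodule.span F {P, Q} ≤ plane F := by
    intro P Q hP hQ
    rw [Submodule.span_le]
    rintro Z (rfl | rfl)
    · exact mem_plane_iff.mpr hP
    · exact mem_plane_iff.mpr hQ
  rcases x with (_ | t) | p <;>
    exact this _ _ ⟨_, _, _, rfl⟩ ⟨_, _, _, rfl⟩

lemma lineOf_rank (x : Option F ⊕ F × F) : Module.finrank F ↥(lineOf x) = 2 := by
  rcases x with (_ | t) | p <;> refine finrank_span_two (lin_ind_mk3 ?_) <;>
    intro x y h1 h2 h3
  · exact ⟨by linear_combination h1, by linear_combination h3⟩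
  · exact ⟨by linear_combination h1, by linear_combination h2⟩
  · exact ⟨by linear_combination h2, by linear_combination h3⟩

lemma extract {P Q M : Mat F} (h : M ∈ Submodule.span F {P, Q}) :
    ∃ x y : F, M = x • P + y • Q := by
  obtain ⟨x, y, hxy⟩ := Submodule.mem_span_pair.mp h
  exact ⟨x, y, hxy.symm⟩

lemma mem_left {P Q : Mat F} : P ∈ Submodule.span F {P, Q} :=
  Submodule.subset_span (by simp)

lemma mem_right {P Q : Mat F} : Q ∈ Submodule.span F {P, Q} :=
  Submodule.subset_span (by simp)

lemma e00_not_mem_inr (p : F × F) : (mk3 1 0 0 : Mat F) ∉ lineOf (Sum.inr p) := by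
  intro h
  obtain ⟨x, y, hxy⟩ := extract h
  rw [← mk3_comb x y p.1 1 0 p.2 0 1 (x*p.1+y*p.2) x y (by ring) (by ring) (by ring)] at hxy
  obtain ⟨h1, h2, h3⟩ := mk3_inj hxy
  rw [← h2, ← h3] at h1
  simp at h1

lemma lineOf_inj : Function.Injective (lineOf (F := F)) := by
  have key : ∀ (t : Option F) (p : F × F), lineOf (Sum.inl t) ≠ lineOf (Sum.inr p) := by
    intro t p h
    apply e00_not_mem_inr p
    rw [← h]
    rcases t with _ | t <;> exact mem_left
  rintro ((_ | t) | p) ((_ | t') | p') h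
  · rfl
  · -- none = some t'
    exfalso
    have := mem_right (F := F) (P := mk3 1 0 0) (Q := mk3 0 0 1)
    rw [show (lineOf (Sum.inl (Option.none : Option F))) = Submodule.span F {mk3 1 0 0, mk3 0 0 1} from rfl] at h
    rw [h] at this
    obtain ⟨x, y, hxy⟩ := extract this
    rw [← mk3_comb x y 1 0 0 0 1 t' x y (y*t') (by ring) (by ring) (by ring)] at hxy
    obtain ⟨h1, h2, h3⟩ := mk3_inj hxy
    rw [← h2] at h3; simp at h3
  · exact absurd h (key _ _)
  · -- some t = none
    exfalso
    have := mem_right (F := F) (P := mk3 1 0 0) (Q := mk3 0 1 t)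
    rw [show (lineOf (Sum.inl (Option.some t))) = Submodule.span F {mk3 1 0 0, mk3 0 1 t} from rfl] at h
    rw [h] at this
    obtain ⟨x, y, hxy⟩ := extract this
    rw [← mk3_comb x y 1 0 0 0 0 1 x 0 y (by ring) (by ring) (by ring)] at hxy
    obtain ⟨h1, h2, h3⟩ := mk3_inj hxy
    simp at h2
  · -- some t = some t'
    have := mem_right (F := F) (P := mk3 1 0 0) (Q := mk3 0 1 t)
    rw [show (lineOf (Sum.inl (Option.some t))) = Submodule.span F {mk3 1 0 0, mk3 0 1 t} from rfl] at h
    rw [h] at this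
    obtain ⟨x, y, hxy⟩ := extract this
    rw [← mk3_comb x y 1 0 0 0 1 t' x y (y*t') (by ring) (by ring) (by ring)] at hxy
    obtain ⟨h1, h2, h3⟩ := mk3_inj hxy
    rw [← h2, one_mul] at h3
    rw [h3]
  · exact absurd h (key _ _)
  · exact absurd h.symm (key _ _)
  · exact absurd h.symm (key _ _)
  · -- inr p = inr p'
    have h1m := mem_left (F := F) (P := mk3 p.1 1 0) (Q := mk3 p.2 0 1)
    have h2m := mem_right (F := F) (P := mk3 p.1 1 0) (Q := mk3 p.2 0 1)
    rw [show (lineOf (Sum.inr p)) = Submodule.span F {mk3 p.1 1 0, mk3 p.2 0 1} from rfl] at h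
    rw [h] at h1m h2m
    obtain ⟨x, y, hxy⟩ := extract h1m
    rw [← mk3_comb x y p'.1 1 0 p'.2 0 1 (x*p'.1+y*p'.2) x y (by ring) (by ring) (by ring)] at hxy
    obtain ⟨e1, e2, e3⟩ := mk3_inj hxy
    obtain ⟨x', y', hxy'⟩ := extract h2m
    rw [← mk3_comb x' y' p'.1 1 0 p'.2 0 1 (x'*p'.1+y'*p'.2) x' y' (by ring) (by ring) (by ring)] at hxy'
    obtain ⟨f1, f2, f3⟩ := mk3_inj hxy'
    have : p.1 = p'.1 := by rw [e1, ← e2, ← e3]; ring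
    have h2 : p.2 = p'.2 := by rw [f1, ← f2, ← f3]; ring
    exact congrArg Sum.inr (Prod.ext this h2)

lemma caseA {β γ : F} (h : ¬(β = 0 ∧ γ = 0)) :
    ∃ t : Option F, Submodule.span F {mk3 1 0 0, mk3 0 β γ} = lineOf (Sum.inl t) := by
  by_cases hβ : β = 0
  · have hγ : γ ≠ 0 := fun hγ => h ⟨hβ, hγ⟩
    subst hβ
    refine ⟨Option.none, ?_⟩
    show _ = Submodule.span F {mk3 1 0 0, mk3 0 0 1}
    exact span_pair_eq 1 0 0 γ⁻¹ 1 0 0 γ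
      (mk3_comb 1 0 1 0 0 0 0 γ 1 0 0 (by ring) (by ring) (by ring))
      (mk3_comb 0 γ⁻¹ 1 0 0 0 0 γ 0 0 1 (by ring) (by ring) (by field_simp; ring))
      (mk3_comb 1 0 1 0 0 0 0 1 1 0 0 (by ring) (by ring) (by ring))
      (mk3_comb 0 γ 1 0 0 0 0 1 0 0 γ (by ring) (by ring) (by ring))
  · refine ⟨Option.some (γ/β), ?_⟩
    show _ = Submodule.span F {mk3 1 0 0, mk3 0 1 (γ/β)}
    exact span_pair_eq 1 0 0 β⁻¹ 1 0 0 β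
      (mk3_comb 1 0 1 0 0 0 β γ 1 0 0 (by ring) (by ring) (by ring))
      (mk3_comb 0 β⁻¹ 1 0 0 0 β γ 0 1 (γ/β) (by ring) (by field_simp; ring) (by field_simp; ring))
      (mk3_comb 1 0 1 0 0 0 1 (γ/β) 1 0 0 (by ring) (by ring) (by ring))
      (mk3_comb 0 β 1 0 0 0 1 (γ/β) 0 β γ (by ring) (by ring) (by field_simp; ring))

lemma caseB {a b c a' b' c' : F} (hbc : ¬(b = 0 ∧ c = 0)) (hd : b*c' - c*b' = 0)
    (hind : ∀ x y : F, x*a+y*a' = 0 → x*b+y*b' = 0 → x*c+y*c' = 0 → x = 0 ∧ y = 0) :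
    ∃ β γ : F, ¬(β = 0 ∧ γ = 0) ∧
      Submodule.span F {mk3 a b c, mk3 a' b' c'}
        = Submodule.span F {mk3 1 0 0, mk3 0 β γ} := by
  refine ⟨b, c, hbc, ?_⟩
  obtain ⟨l, hb', hc'⟩ : ∃ l : F, b' = l*b ∧ c' = l*c := by
    by_cases hb : b = 0
    · have hc : c ≠ 0 := fun hc => hbc ⟨hb, hc⟩
      have hb'0 : b' = 0 := by
        have h0 : c * b' = 0 := by linear_combination -hd + c'*hb
        rcases mul_eq_zero.mp h0 with h | h
        · exact absurd h hc
        · exact h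
      exact ⟨c'/c, by rw [hb, hb'0]; ring, by field_simp⟩
    · refine ⟨b'/b, by field_simp, ?_⟩
      field_simp
      linear_combination hd
  subst hb'; subst hc'
  have he : a' - l*a ≠ 0 := fun he =>
    one_ne_zero (hind (-l) 1 (by linear_combination he) (by ring) (by ring)).2
  obtain ⟨e, hedef⟩ : ∃ e : F, a' = l*a + e := ⟨a' - l*a, by ring⟩
  have he' : e ≠ 0 := by
    intro h0
    apply he
    rw [hedef, h0]; ring
  subst hedef
  exact span_pair_eq (-l/e) (1/e) (1 + a*l/e) (-a/e) a 1 (l*a+e) l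
    (mk3_comb (-l/e) (1/e) a b c (l*a+e) (l*b) (l*c) 1 0 0
      (by field_simp; try ring) (by field_simp; try ring) (by field_simp; try ring))
    (mk3_comb (1 + a*l/e) (-a/e) a b c (l*a+e) (l*b) (l*c) 0 b c
      (by field_simp; ring) (by field_simp; ring) (by field_simp; ring))
    (mk3_comb a 1 1 0 0 0 b c a b c (by ring) (by ring) (by ring))
    (mk3_comb (l*a+e) l 1 0 0 0 b c (l*a+e) (l*b) (l*c)
      (by ring) (by ring) (by ring))

lemma classify {W : Submodule F (Mat F)} (hW : W ≤ plane F)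
    (hr : Module.finrank F ↥W = 2) :
    ∃ x : Option F ⊕ F × F, W = lineOf x := by
  have bW := Module.finBasisOfFinrankEq F W hr
  have hind0 : LinearIndependent F ![(bW 0 : Mat F), (bW 1 : Mat F)] := by
    have h1 := bW.linearIndependent.map' W.subtype (Submodule.ker_subtype W)
    have h2 : (⇑W.subtype ∘ ⇑bW) = ![(bW 0 : Mat F), (bW 1 : Mat F)] := by
      funext i; fin_cases i <;> rfl
    rwa [h2] at h1
  have hspan : W = Submodule.span F {(bW 0 : Mat F), (bW 1 : Mat F)} := by
    have hmap : W = Submodule.map W.subtype (Submodule.span F (Set.range ⇑bW)) := by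
      rw [bW.span_eq, Submodule.map_top, Submodule.range_subtype]
    have himg : (⇑W.subtype '' Set.range ⇑bW) = {(bW 0 : Mat F), (bW 1 : Mat F)} := by
      ext z
      constructor
      · rintro ⟨w, ⟨i, rfl⟩, rfl⟩
        fin_cases i
        · exact Set.mem_insert _ _
        · exact Set.mem_insert_of_mem _ rfl
      · rintro (rfl | rfl)
        · exact ⟨bW 0, ⟨0, rfl⟩, rfl⟩
        · exact ⟨bW 1, ⟨1, rfl⟩, rfl⟩
    conv_lhs => rw [hmap]
    rw [Submodule.map_span, himg]
  obtain ⟨a, b, c, hM⟩ := mem_plane_iff.mp (hW (bW 0).2)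
  obtain ⟨a', b', c', hN⟩ := mem_plane_iff.mp (hW (bW 1).2)
  rw [hM, hN] at hind0 hspan
  have hcoord := coord_of_ind hind0
  by_cases hd : b*c' - c*b' = 0
  · by_cases hbc : b = 0 ∧ c = 0
    · have hbc' : ¬(b' = 0 ∧ c' = 0) := by
        rintro ⟨h1, h2⟩
        obtain ⟨h3, h4⟩ := hbc
        have ha : a = 0 := by
          have := hcoord a' (-a) (by ring) (by rw [h1, h3]; ring) (by rw [h2, h4]; ring)
          linear_combination -this.2
        have := hcoord 1 0 (by rw [ha]; ring) (by rw [h3]; ring) (by rw [h4]; ring)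
        exact one_ne_zero this.1
      have hd' : b'*c - c'*b = 0 := by linear_combination -hd
      have hind' : ∀ x y : F, x*a'+y*a = 0 → x*b'+y*b = 0 → x*c'+y*c = 0 → x = 0 ∧ y = 0 := by
        intro x y h1 h2 h3
        have := hcoord y x (by linear_combination h1) (by linear_combination h2)
          (by linear_combination h3)
        exact ⟨this.2, this.1⟩
      obtain ⟨β, γ, hβγ, hsp⟩ := caseB hbc' hd' hind'
      obtain ⟨t, ht⟩ := caseA hβγ
      exact ⟨Sum.inl t, by rw [hspan, Set.pair_comm, hsp, ht]⟩
    · obtain ⟨β, γ, hβγ, hsp⟩ := caseB hbc hd hcoord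
      obtain ⟨t, ht⟩ := caseA hβγ
      exact ⟨Sum.inl t, by rw [hspan, hsp, ht]⟩
  · refine ⟨Sum.inr (c'/(b*c'-c*b')*a - c/(b*c'-c*b')*a',
      -(b'/(b*c'-c*b'))*a + b/(b*c'-c*b')*a'), ?_⟩
    rw [hspan]
    show _ = Submodule.span F
      {mk3 (c'/(b*c'-c*b')*a - c/(b*c'-c*b')*a') 1 0,
       mk3 (-(b'/(b*c'-c*b'))*a + b/(b*c'-c*b')*a') 0 1}
    exact span_pair_eq (c'/(b*c'-c*b')) (-(c/(b*c'-c*b'))) (-(b'/(b*c'-c*b')))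
      (b/(b*c'-c*b')) b c b' c'
      (mk3_comb (c'/(b*c'-c*b')) (-(c/(b*c'-c*b'))) a b c a' b' c'
        (c'/(b*c'-c*b')*a - c/(b*c'-c*b')*a') 1 0
        (by ring) (by linear_combination mul_inv_cancel₀ hd) (by field_simp; ring))
      (mk3_comb (-(b'/(b*c'-c*b'))) (b/(b*c'-c*b')) a b c a' b' c'
        (-(b'/(b*c'-c*b'))*a + b/(b*c'-c*b')*a') 0 1
        (by ring) (by field_simp; ring) (by linear_combination mul_inv_cancel₀ hd))
      (mk3_comb b c (c'/(b*c'-c*b')*a - c/(b*c'-c*b')*a') 1 0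
        (-(b'/(b*c'-c*b'))*a + b/(b*c'-c*b')*a') 0 1 a b c
        (by field_simp; ring) (by ring) (by ring))
      (mk3_comb b' c' (c'/(b*c'-c*b')*a - c/(b*c'-c*b')*a') 1 0
        (-(b'/(b*c'-c*b'))*a + b/(b*c'-c*b')*a') 0 1 a' b' c'
        (by linear_combination a' * mul_inv_cancel₀ hd) (by ring) (by ring))

lemma congrAct_apply (A M : Mat F) : congrAct F A M = A * M * Aᵀ := rfl

lemma map_span_pair (A P Q : Mat F) :
    Submodule.map (congrAct F A) (Submodule.span F {P, Q})
      = Submodule.span F {A * P * Aᵀ, A * Q * Aᵀ} := by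
  rw [Submodule.map_span, Set.image_insert_eq, Set.image_singleton]
  rfl

set_option maxHeartbeats 1000000 in
lemma prod_none1 : (!![1,0,0;0,0,1;0,1,0] : Mat F) * mk3 1 0 0
    * (!![1,0,0;0,0,1;0,1,0] : Mat F)ᵀ = mk3 1 0 0 := by
  ext i j
  fin_cases i <;> fin_cases j <;>
    simp [Matrix.mul_apply, Fin.sum_univ_three, mk3, Matrix.vecHead, Matrix.vecTail]

set_option maxHeartbeats 1000000 in
lemma prod_none2 : (!![1,0,0;0,0,1;0,1,0] : Mat F) * mk3 0 0 1
    * (!![1,0,0;0,0,1;0,1,0] : Mat F)ᵀ = mk3 0 1 0 := by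
  ext i j
  fin_cases i <;> fin_cases j <;>
    simp [Matrix.mul_apply, Fin.sum_univ_three, mk3, Matrix.vecHead, Matrix.vecTail]

set_option maxHeartbeats 1000000 in
lemma prod_some1 (t : F) : (!![1,0,0;0,1,0;0,-t,1] : Mat F) * mk3 1 0 0
    * (!![1,0,0;0,1,0;0,-t,1] : Mat F)ᵀ = mk3 1 0 0 := by
  ext i j
  fin_cases i <;> fin_cases j <;>
    simp [Matrix.mul_apply, Fin.sum_univ_three, mk3, Matrix.vecHead, Matrix.vecTail]

set_option maxHeartbeats 1000000 in
lemma prod_some2 (t : F) : (!![1,0,0;0,1,0;0,-t,1] : Mat F) * mk3 0 1 t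
    * (!![1,0,0;0,1,0;0,-t,1] : Mat F)ᵀ = mk3 0 1 0 := by
  ext i j
  fin_cases i <;> fin_cases j <;>
    simp [Matrix.mul_apply, Fin.sum_univ_three, mk3, Matrix.vecHead, Matrix.vecTail] <;>
    ring

lemma equiv_inl (t : Option F) : MatEquiv F (lineOf (Sum.inl t)) (o6 F) := by
  rcases t with _ | t
  · refine ⟨!![1,0,0;0,0,1;0,1,0], ?_, ?_⟩
    · rw [Matrix.isUnit_iff_isUnit_det, Matrix.det_fin_three]
      simp
    · show o6 F = Submodule.map _ (Submodule.span F {mk3 1 0 0, mk3 0 0 1})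
      rw [map_span_pair, o6_eq, prod_none1, prod_none2]
  · refine ⟨!![1,0,0;0,1,0;0,-t,1], ?_, ?_⟩
    · rw [Matrix.isUnit_iff_isUnit_det, Matrix.det_fin_three]
      simp
    · show o6 F = Submodule.map _ (Submodule.span F {mk3 1 0 0, mk3 0 1 t})
      rw [map_span_pair, o6_eq, prod_some1, prod_some2]

set_option maxHeartbeats 1000000 in
lemma prod_inr1 (h2 : (2:F) ≠ 0) (u v : F) :
    (!![0,1,0;1,-(2⁻¹*u),-(2⁻¹*v);0,0,1] : Mat F) * mk3 u 1 0
        * (!![0,1,0;1,-(2⁻¹*u),-(2⁻¹*v);0,0,1] : Mat F)ᵀ = mk3 0 1 0 := by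
  ext i j
  fin_cases i <;> fin_cases j <;>
    simp [Matrix.mul_apply, Fin.sum_univ_three, mk3, Matrix.vecHead, Matrix.vecTail] <;>
    field_simp <;> ring

set_option maxHeartbeats 1000000 in
lemma prod_inr2 (h2 : (2:F) ≠ 0) (u v : F) :
    (!![0,1,0;1,-(2⁻¹*u),-(2⁻¹*v);0,0,1] : Mat F) * mk3 v 0 1
        * (!![0,1,0;1,-(2⁻¹*u),-(2⁻¹*v);0,0,1] : Mat F)ᵀ = (X12 : Mat F) := by
  ext i j
  fin_cases i <;> fin_cases j <;>
    simp [Matrix.mul_apply, Fin.sum_univ_three, mk3, X12, Matrix.vecHead, Matrix.vecTail] <;>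
    field_simp <;> ring

lemma equiv_inr (h2 : (2:F) ≠ 0) (p : F × F) :
    MatEquiv F (lineOf (Sum.inr p)) (o12 F) := by
  obtain ⟨u, v⟩ := p
  refine ⟨!![0,1,0;1,-(2⁻¹*u),-(2⁻¹*v);0,0,1], ?_, ?_⟩
  · rw [Matrix.isUnit_iff_isUnit_det, Matrix.det_fin_three]
    simp
  · show o12 F = Submodule.map _ (Submodule.span F {mk3 u 1 0, mk3 v 0 1})
    rw [map_span_pair, o12_eq, prod_inr1 h2, prod_inr2 h2]

set_option maxHeartbeats 800000 in
lemma rank1_congr (B : Mat F) :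
    B * mk3 1 0 0 * Bᵀ = Matrix.of (fun i j => B i 0 * B j 0) := by
  ext i j
  fin_cases i <;> fin_cases j <;>
    simp [Matrix.mul_apply, Fin.sum_univ_three, mk3, Matrix.vecHead, Matrix.vecTail]

lemma col_ne_zero {A : Mat F} (hA : IsUnit A) : ¬ (∀ i : Fin 3, A i 0 = 0) := by
  intro h
  have hdet : IsUnit A.det := (Matrix.isUnit_iff_isUnit_det A).mp hA
  haveI := A.invertibleOfIsUnitDet hdet
  have h1 : A⁻¹ * A = 1 := Matrix.inv_mul_of_invertible A
  have h2 := congr_fun (congr_fun h1 0) 0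
  rw [Matrix.mul_apply] at h2
  simp [Fin.sum_univ_three, h 0, h 1, h 2, Matrix.one_apply] at h2

lemma not_equiv_o6 (p : F × F) : ¬ MatEquiv F (lineOf (Sum.inr p)) (o6 F) := by
  rintro ⟨A, hA, heq⟩
  have hmem : (mk3 1 0 0 : Mat F) ∈ o6 F := by rw [o6_eq]; exact mem_left
  rw [heq] at hmem
  obtain ⟨M, hM, hMe⟩ := hmem
  rw [congrAct_apply] at hMe
  have hdet : IsUnit A.det := (Matrix.isUnit_iff_isUnit_det A).mp hA
  haveI := A.invertibleOfIsUnitDet hdet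
  haveI : Invertible Aᵀ := (Matrix.transposeInvertibleEquivInvertible A).symm inferInstance
  have key : M = A⁻¹ * mk3 1 0 0 * (A⁻¹)ᵀ := by
    rw [Matrix.transpose_nonsing_inv, ← hMe, ← Matrix.mul_assoc A⁻¹ (A * M) Aᵀ,
      Matrix.mul_inv_cancel_right_of_invertible, ← Matrix.mul_assoc A⁻¹ A M,
      Matrix.inv_mul_of_invertible, Matrix.one_mul]
  rw [rank1_congr] at key
  obtain ⟨x, y, hxy⟩ := extract hM
  rw [← mk3_comb x y p.1 1 0 p.2 0 1 (x*p.1+y*p.2) x y (by ring) (by ring) (by ring)] at hxy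
  rw [hxy] at key
  have hent : ∀ i j : Fin 3, mk3 (x*p.1+y*p.2) x y i j = A⁻¹ i 0 * A⁻¹ j 0 :=
    fun i j => congr_fun (congr_fun key i) j
  have h10 : A⁻¹ 1 0 = 0 := by
    have h1 := hent 1 1
    simp [mk3, Matrix.vecHead, Matrix.vecTail] at h1
    first | exact h1 | exact h1.symm | exact mul_self_eq_zero.mp h1.symm
  have h20 : A⁻¹ 2 0 = 0 := by
    have h1 := hent 2 2
    simp [mk3, Matrix.vecHead, Matrix.vecTail] at h1
    first | exact h1 | exact h1.symm | exact mul_self_eq_zero.mp h1.symm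
  have hx : x = 0 := by
    have h1 := hent 0 1
    simp [mk3, Matrix.vecHead, Matrix.vecTail, h10] at h1
    first | exact h1 | exact h1.symm
  have hy : y = 0 := by
    have h1 := hent 0 2
    simp [mk3, Matrix.vecHead, Matrix.vecTail, h20] at h1
    first | exact h1 | exact h1.symm
  have h00 : A⁻¹ 0 0 = 0 := by
    have h1 := hent 0 0
    simp [mk3, Matrix.vecHead, Matrix.vecTail, hx, hy] at h1
    first | exact h1 | exact h1.symm | exact mul_self_eq_zero.mp h1.symm
  have hinv : IsUnit (A⁻¹) := by
    rw [Matrix.isUnit_iff_isUnit_det]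
    exact (Matrix.isUnit_nonsing_inv_det A hdet)
  exact col_ne_zero hinv (fun i => by fin_cases i <;> assumption)

lemma not_equiv_o12 (t : Option F) : ¬ MatEquiv F (lineOf (Sum.inl t)) (o12 F) := by
  rintro ⟨A, hA, heq⟩
  have hmem : (mk3 1 0 0 : Mat F) ∈ lineOf (Sum.inl t) := by
    rcases t with _ | t <;> exact mem_left
  have hmem2 : A * mk3 1 0 0 * Aᵀ ∈ o12 F := by
    rw [heq]
    exact Submodule.mem_map_of_mem hmem
  rw [o12_eq] at hmem2
  obtain ⟨x, y, hxy⟩ := extract hmem2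
  rw [rank1_congr] at hxy
  have hz : ∀ i : Fin 3, A i 0 = 0 := by
    intro i
    have h1 := congr_fun (congr_fun hxy i) i
    fin_cases i <;>
      simp [mk3, X12, Matrix.vecHead, Matrix.vecTail] at h1 <;>
      (first | exact h1 | exact h1.symm | exact mul_self_eq_zero.mp h1 |
        exact mul_self_eq_zero.mp h1.symm)
  exact col_ne_zero hA hz

end Stmt6


theorem statement_6 (F : Type) [Field F] [Fintype F] (q : ℕ)
    (hq : Fintype.card F = q) (hodd : Odd q) :
    lineCount F (plane F) (o6 F) = q + 1 ∧
    lineCount F (plane F) (o12 F) = q ^ 2 ∧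
    (∀ W : Submodule F (Mat F), W ≤ (plane F) → Module.finrank F ↥W = 2 →
      (MatEquiv F W (o6 F) ∨
        MatEquiv F W (o12 F))) ∧
    Nat.card {W : Submodule F (Mat F) // W ≤ (plane F) ∧ Module.finrank F ↥W = 2} = q ^ 2 + q + 1 := by
  classical
  have h2 : (2:F) ≠ 0 := by
    intro h
    have hchar : ringChar F = 2 := by
      have hdvd : ringChar F ∣ 2 :=
        (CharP.cast_eq_zero_iff F (ringChar F) 2).mp (by exact_mod_cast h)
      rcases (Nat.Prime.eq_one_or_self_of_dvd Nat.prime_two _ hdvd) with h1 | h1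
      · exact absurd h1 (CharP.char_is_prime F (ringChar F)).ne_one
      · exact h1
    have heven := FiniteField.even_card_iff_char_two.mp hchar
    rw [hq] at heven
    rw [Nat.odd_iff] at hodd
    omega
  have b1 : Function.Bijective (fun t : Option F =>
      (⟨Stmt6.lineOf (Sum.inl t), Stmt6.lineOf_le _, Stmt6.lineOf_rank _, Stmt6.equiv_inl t⟩ :
        {W : Submodule F (Mat F) // W ≤ plane F ∧ Module.finrank F ↥W = 2 ∧
          MatEquiv F W (o6 F)})) := by
    constructor
    · intro t t' h
      have hval : Stmt6.lineOf (Sum.inl t) = Stmt6.lineOf (Sum.inl t') :=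
        congrArg Subtype.val h
      simpa using Stmt6.lineOf_inj hval
    · rintro ⟨W, hW, hr, heq⟩
      obtain ⟨x, rfl⟩ := Stmt6.classify hW hr
      rcases x with t | p
      · exact ⟨t, rfl⟩
      · exact absurd heq (Stmt6.not_equiv_o6 p)
  have b2 : Function.Bijective (fun p : F × F =>
      (⟨Stmt6.lineOf (Sum.inr p), Stmt6.lineOf_le _, Stmt6.lineOf_rank _, Stmt6.equiv_inr h2 p⟩ :
        {W : Submodule F (Mat F) // W ≤ plane F ∧ Module.finrank F ↥W = 2 ∧
          MatEquiv F W (o12 F)})) := by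
    constructor
    · intro t t' h
      have hval : Stmt6.lineOf (Sum.inr t) = Stmt6.lineOf (Sum.inr t') :=
        congrArg Subtype.val h
      simpa using Stmt6.lineOf_inj hval
    · rintro ⟨W, hW, hr, heq⟩
      obtain ⟨x, rfl⟩ := Stmt6.classify hW hr
      rcases x with t | p
      · exact absurd heq (Stmt6.not_equiv_o12 t)
      · exact ⟨p, rfl⟩
  have b3 : Function.Bijective (fun x : Option F ⊕ F × F =>
      (⟨Stmt6.lineOf x, Stmt6.lineOf_le x, Stmt6.lineOf_rank x⟩ :
        {W : Submodule F (Mat F) // W ≤ plane F ∧ Module.finrank F ↥W = 2})) := by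
    constructor
    · intro t t' h
      exact Stmt6.lineOf_inj (F := F) (congrArg Subtype.val h)
    · rintro ⟨W, hW, hr⟩
      obtain ⟨x, rfl⟩ := Stmt6.classify hW hr
      exact ⟨x, rfl⟩
  refine ⟨?_, ?_, ?_, ?_⟩
  · show Nat.card _ = q + 1
    rw [← Nat.card_eq_of_bijective _ b1, Nat.card_eq_fintype_card, Fintype.card_option, hq]
  · show Nat.card _ = q ^ 2
    rw [← Nat.card_eq_of_bijective _ b2, Nat.card_eq_fintype_card, Fintype.card_prod, hq]
    ring
  · intro W hW hr
    obtain ⟨x, rfl⟩ := Stmt6.classify hW hr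
    rcases x with t | p
    · exact Or.inl (Stmt6.equiv_inl t)
    · exact Or.inr (Stmt6.equiv_inr h2 p)
  · rw [← Nat.card_eq_of_bijective _ b3, Nat.card_eq_fintype_card, Fintype.card_sum,
      Fintype.card_option, Fintype.card_prod, hq]
    ring
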